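/- Risk of the optimal Gaussian separating test over convex sets: let M₁, M₂ be nonempty convex compact subsets of ℝ^d at positive Euclidean distance, (μ*, ν*) a pair minimizing ‖μ-ν‖₂ over M₁ × M₂, and φ(ω) = ½(μ*-ν*)ᵀ(ω - ½(μ*+ν*)). Then for every μ ∈ M₁, Prob_{ω ∼ N(μ,I_d)}{φ(ω) < 0} ≤ exp(-‖μ*-ν*‖₂²/8), and for every ν ∈ M₂, Prob_{ω ∼ N(ν,I_d)}{φ(ω) ≥ 0} ≤ exp(-‖μ*-ν*‖₂²/8). -/

import Mathlib

open MeasureTheory Real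
open scoped RealInnerProductSpace

variable {d : ℕ}

lemma gauss_integrable' :
    Integrable (fun v : EuclideanSpace ℝ (Fin d) => rexp (-(1/2 : ℝ) * ‖v‖ ^ 2)) := by
  have h := (GaussianFourier.integrable_cexp_neg_mul_sq_norm_add
      (V := EuclideanSpace ℝ (Fin d)) (b := (1/2 : ℂ)) (by norm_num) 0 0).norm
  simpa [Complex.norm_exp, ← Complex.ofReal_pow] using h

lemma gauss_integrable (p : EuclideanSpace ℝ (Fin d)) :
    Integrable (fun ω : EuclideanSpace ℝ (Fin d) => rexp (-‖ω - p‖ ^ 2 / 2)) := by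
  have h := (gauss_integrable' (d := d)).comp_add_right (-p)
  have e : (fun ω : EuclideanSpace ℝ (Fin d) => rexp (-‖ω - p‖ ^ 2 / 2))
      = fun ω => rexp (-(1/2:ℝ) * ‖ω + -p‖ ^ 2) := by
    funext ω; rw [← sub_eq_add_neg]; ring_nf
  rw [e]; exact h

lemma gauss_integral (p : EuclideanSpace ℝ (Fin d)) :
    ∫ ω : EuclideanSpace ℝ (Fin d), rexp (-‖ω - p‖ ^ 2 / 2)
      = (2 * π) ^ ((d : ℝ) / 2) := by
  have h0 : ∫ v : EuclideanSpace ℝ (Fin d), rexp (-(1/2:ℝ) * ‖v‖ ^ 2)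
      = (2 * π) ^ ((d : ℝ) / 2) := by
    have := GaussianFourier.integral_rexp_neg_mul_sq_norm (V := EuclideanSpace ℝ (Fin d))
      (b := (1/2 : ℝ)) (by norm_num)
    rw [this, finrank_euclideanSpace_fin]
    rw [show π / (1/2:ℝ) = 2 * π by ring]
  have e : (fun ω : EuclideanSpace ℝ (Fin d) => rexp (-‖ω - p‖ ^ 2 / 2))
      = fun ω => rexp (-(1/2:ℝ) * ‖ω + -p‖ ^ 2) := by
    funext ω; rw [← sub_eq_add_neg]; ring_nf
  calc ∫ ω : EuclideanSpace ℝ (Fin d), rexp (-‖ω - p‖ ^ 2 / 2)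
      = ∫ ω : EuclideanSpace ℝ (Fin d), rexp (-(1/2:ℝ) * ‖ω + -p‖ ^ 2) := by rw [e]
    _ = ∫ v : EuclideanSpace ℝ (Fin d), rexp (-(1/2:ℝ) * ‖v‖ ^ 2) :=
        integral_add_right_eq_self (μ := volume)
          (fun v : EuclideanSpace ℝ (Fin d) => rexp (-(1/2:ℝ) * ‖v‖ ^ 2)) (-p)
    _ = (2 * π) ^ ((d : ℝ) / 2) := h0

lemma key_bound (w μ : EuclideanSpace ℝ (Fin d)) (t : ℝ) (s : Set (EuclideanSpace ℝ (Fin d)))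
    (hs : MeasurableSet s) (hsub : ∀ ω ∈ s, t ≤ ⟪w, ω - μ⟫) :
    ∫ ω in s, (2 * π) ^ (-(d : ℝ) / 2) * rexp (-‖ω - μ‖ ^ 2 / 2)
      ≤ rexp (‖w‖ ^ 2 / 2 - t) := by
  set c : ℝ := (2 * π) ^ (-(d : ℝ) / 2) with hc
  have hcpos : 0 < c := Real.rpow_pos_of_pos (by positivity) _
  set K : ℝ := rexp (‖w‖ ^ 2 / 2 - t) with hK
  set g : EuclideanSpace ℝ (Fin d) → ℝ :=
    fun ω => c * K * rexp (-‖ω - (μ + w)‖ ^ 2 / 2) with hg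
  have hgint : Integrable g := ((gauss_integrable (μ + w)).const_mul (c * K))
  have hfint : Integrable (fun ω : EuclideanSpace ℝ (Fin d) =>
      c * rexp (-‖ω - μ‖ ^ 2 / 2)) := (gauss_integrable μ).const_mul c
  have hpt : ∀ ω ∈ s, c * rexp (-‖ω - μ‖ ^ 2 / 2) ≤ g ω := by
    intro ω hω
    have hiden : ‖ω - (μ + w)‖ ^ 2 = ‖ω - μ‖ ^ 2 - 2 * ⟪ω - μ, w⟫ + ‖w‖ ^ 2 := by
      have : ω - (μ + w) = (ω - μ) - w := by abel
      rw [this, @norm_sub_sq_real]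
    have h1 : t ≤ ⟪w, ω - μ⟫ := hsub ω hω
    have h2 : ⟪w, ω - μ⟫ = ⟪ω - μ, w⟫ := real_inner_comm _ _
    have hexp : -‖ω - μ‖ ^ 2 / 2 ≤ (‖w‖ ^ 2 / 2 - t) + (-‖ω - (μ + w)‖ ^ 2 / 2) := by
      rw [hiden]; nlinarith
    calc c * rexp (-‖ω - μ‖ ^ 2 / 2)
        ≤ c * rexp ((‖w‖ ^ 2 / 2 - t) + (-‖ω - (μ + w)‖ ^ 2 / 2)) := by
          exact mul_le_mul_of_nonneg_left (Real.exp_le_exp.mpr hexp) hcpos.le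
      _ = g ω := by rw [hg]; simp only [Real.exp_add]; ring_nf; rw [hK]; ring
  have step1 : ∫ ω in s, c * rexp (-‖ω - μ‖ ^ 2 / 2) ≤ ∫ ω in s, g ω :=
    setIntegral_mono_on hfint.integrableOn hgint.integrableOn hs hpt
  have step2 : ∫ ω in s, g ω ≤ ∫ ω, g ω :=
    setIntegral_le_integral hgint (Filter.Eventually.of_forall fun ω => by
      positivity)
  have step3 : ∫ ω, g ω = c * K * (2 * π) ^ ((d : ℝ) / 2) := by
    rw [hg, integral_const_mul, gauss_integral]
  have hcK : c * (2 * π) ^ ((d : ℝ) / 2) = 1 := by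
    rw [hc, ← Real.rpow_add (by positivity),
      show (-(d:ℝ)/2 + (d:ℝ)/2) = 0 by ring, Real.rpow_zero]
  calc ∫ ω in s, c * rexp (-‖ω - μ‖ ^ 2 / 2) ≤ ∫ ω, g ω := step1.trans step2
    _ = c * K * (2 * π) ^ ((d : ℝ) / 2) := step3
    _ = K * (c * (2 * π) ^ ((d : ℝ) / 2)) := by ring
    _ = K := by rw [hcK, mul_one]


lemma var_ineq {E : Type*} [NormedAddCommGroup E] [InnerProductSpace ℝ E] [CompleteSpace E]
    {K : Set E} (hK : Convex ℝ K) {u v : E} (hv : v ∈ K)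
    (hmin : ∀ w ∈ K, ‖u - v‖ ≤ ‖u - w‖) : ∀ w ∈ K, ⟪u - v, w - v⟫ ≤ 0 := by
  haveI : Nonempty ↑K := ⟨⟨v, hv⟩⟩
  have hinf : ‖u - v‖ = ⨅ w : K, ‖u - w‖ := by
    refine le_antisymm (le_ciInf fun w => hmin w w.2)
      (ciInf_le (f := fun w : K => ‖u - (w : E)‖) ⟨0, fun x hx => by obtain ⟨w, rfl⟩ := hx; exact norm_nonneg _⟩ ⟨v, hv⟩)
  exact (norm_eq_iInf_iff_real_inner_le_zero hK hv).mp hinf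

set_option maxHeartbeats 1000000

/-- Risk of the optimal Gaussian separating test over convex sets: with `(μ*,ν*)` a
distance-minimizing pair of the disjoint nonempty convex compact sets `M₁, M₂` and
`φ(ω) = ½⟪μ*-ν*, ω - ½(μ*+ν*)⟫`, the probability of `φ < 0` under `N(μ, I_d)`, `μ ∈ M₁`,
and of `φ ≥ 0` under `N(ν, I_d)`, `ν ∈ M₂`, are at most `exp(-‖μ*-ν*‖²/8)`. -/
theorem gaussian_convex_test_risk (d : ℕ)
    (M₁ M₂ : Set (EuclideanSpace ℝ (Fin d)))
    (h₁ne : M₁.Nonempty) (h₂ne : M₂.Nonempty)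
    (h₁c : Convex ℝ M₁) (h₂c : Convex ℝ M₂)
    (h₁k : IsCompact M₁) (h₂k : IsCompact M₂)
    (μs νs : EuclideanSpace ℝ (Fin d)) (hμs : μs ∈ M₁) (hνs : νs ∈ M₂)
    (hpos : μs ≠ νs)
    (hmin : ∀ μ ∈ M₁, ∀ ν ∈ M₂, ‖μs - νs‖ ≤ ‖μ - ν‖)
    (φ : EuclideanSpace ℝ (Fin d) → ℝ)
    (hφ : ∀ ω, φ ω = (1 / 2) * ⟪μs - νs, ω - (1 / 2 : ℝ) • (μs + νs)⟫) :
    (∀ μ ∈ M₁,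
      (∫ ω in {ω : EuclideanSpace ℝ (Fin d) | φ ω < 0},
          (2 * Real.pi) ^ (-(d : ℝ) / 2) * Real.exp (-‖ω - μ‖ ^ 2 / 2))
        ≤ Real.exp (-‖μs - νs‖ ^ 2 / 8)) ∧
    (∀ ν ∈ M₂,
      (∫ ω in {ω : EuclideanSpace ℝ (Fin d) | 0 ≤ φ ω},
          (2 * Real.pi) ^ (-(d : ℝ) / 2) * Real.exp (-‖ω - ν‖ ^ 2 / 2))
        ≤ Real.exp (-‖μs - νs‖ ^ 2 / 8)) := by
  set a : EuclideanSpace ℝ (Fin d) := μs - νs with ha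
  set m : EuclideanSpace ℝ (Fin d) := (1/2 : ℝ) • (μs + νs) with hm
  have hcont : Continuous φ := by
    have : φ = fun ω => (1/2 : ℝ) * ⟪a, ω - m⟫ := funext hφ
    rw [this]
    exact continuous_const.mul (continuous_const.inner (continuous_id.sub continuous_const))
  haveI : Nonempty ↑M₁ := ⟨⟨μs, hμs⟩⟩
  haveI : Nonempty ↑M₂ := ⟨⟨νs, hνs⟩⟩
  have hvar1 : ∀ μ ∈ M₁, (0:ℝ) ≤ ⟪a, μ - μs⟫ := by
    intro μ hμ
    have h := var_ineq h₁c hμs (fun w hw => by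
      rw [norm_sub_rev νs μs, norm_sub_rev νs w]; exact hmin w hw νs hνs) μ hμ
    have h2 : ⟪νs - μs, μ - μs⟫ = -⟪a, μ - μs⟫ := by
      rw [show νs - μs = -a by rw [ha]; abel, inner_neg_left]
    rw [h2] at h; linarith
  have hvar2 : ∀ ν ∈ M₂, ⟪a, ν - νs⟫ ≤ (0:ℝ) := by
    intro ν hν
    exact var_ineq h₂c hνs (fun w hw => hmin μs hμs w hw) ν hν
  have hμsm : ⟪a, μs - m⟫ = (1/2 : ℝ) * ‖a‖ ^ 2 := by
    rw [show μs - m = (1/2 : ℝ) • a by rw [hm, ha]; module,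
      real_inner_smul_right, real_inner_self_eq_norm_sq]
  have hνsm : ⟪a, νs - m⟫ = -((1/2 : ℝ) * ‖a‖ ^ 2) := by
    rw [show νs - m = -((1/2 : ℝ) • a) by rw [hm, ha]; module,
      inner_neg_right, real_inner_smul_right, real_inner_self_eq_norm_sq]
  constructor
  · intro μ hμ
    have hs : MeasurableSet {ω : EuclideanSpace ℝ (Fin d) | φ ω < 0} :=
      measurableSet_lt hcont.measurable measurable_const
    have hsub : ∀ ω ∈ {ω : EuclideanSpace ℝ (Fin d) | φ ω < 0},
        ‖a‖ ^ 2 / 4 ≤ ⟪-((1/2 : ℝ) • a), ω - μ⟫ := by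
      intro ω hω
      rw [Set.mem_setOf_eq, hφ ω] at hω
      have hd : ω - μ = (ω - m) - (μ - μs) - (μs - m) := by abel
      rw [inner_neg_left, real_inner_smul_left, hd, inner_sub_right, inner_sub_right, hμsm]
      have := hvar1 μ hμ
      nlinarith
    have happ := key_bound (-((1/2 : ℝ) • a)) μ (‖a‖ ^ 2 / 4) _ hs hsub
    have hne : ‖-((1/2 : ℝ) • a)‖ ^ 2 / 2 - ‖a‖ ^ 2 / 4 = -‖a‖ ^ 2 / 8 := by
      rw [norm_neg, norm_smul]; simp [Real.norm_eq_abs]; ring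
    rwa [hne] at happ
  · intro ν hν
    have hs : MeasurableSet {ω : EuclideanSpace ℝ (Fin d) | 0 ≤ φ ω} :=
      measurableSet_le measurable_const hcont.measurable
    have hsub : ∀ ω ∈ {ω : EuclideanSpace ℝ (Fin d) | 0 ≤ φ ω},
        ‖a‖ ^ 2 / 4 ≤ ⟪(1/2 : ℝ) • a, ω - ν⟫ := by
      intro ω hω
      rw [Set.mem_setOf_eq, hφ ω] at hω
      have hd : ω - ν = (ω - m) - (ν - νs) - (νs - m) := by abel
      rw [real_inner_smul_left, hd, inner_sub_right, inner_sub_right, hνsm]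
      have := hvar2 ν hν
      nlinarith
    have happ := key_bound ((1/2 : ℝ) • a) ν (‖a‖ ^ 2 / 4) _ hs hsub
    have hne : ‖(1/2 : ℝ) • a‖ ^ 2 / 2 - ‖a‖ ^ 2 / 4 = -‖a‖ ^ 2 / 8 := by
      rw [norm_smul]; simp [Real.norm_eq_abs]; ring
    rwa [hne] at happ
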